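/- Let M be a finite matroid that is representable over some field, let n ≥ 4 be an integer, and let X_1, …, X_n be any subsets of the ground set E(M). Then M satisfies the n-th Kinser inequality for X_1, …, X_n, that is: ∑_{i=3}^n r(X_i) + r(X_1∪X_2) + r(X_1∪X_3∪X_n) + ∑_{i=4}^n r(X_2∪X_{i-1}∪X_i) ≤ r(X_1∪X_3) + r(X_1∪X_n) + ∑_{i=3}^n r(X_2∪X_i) + ∑_{i=4}^n r(X_{i-1}∪X_i). -/

import Mathlib

open Finset

universe u v

namespace Matroid

variable {α : Type*}

/-- The rank of a set in a matroid: the cardinality of a largest independent subset. -/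
noncomputable def rnk (M : Matroid α) (X : Set α) : ℕ :=
  sSup {n : ℕ | ∃ I, M.Indep I ∧ I ⊆ X ∧ I.ncard = n}

/-- The `n`-th Kinser inequality for the family `X 1, …, X n`. -/
def KinserIneq (M : Matroid α) (n : ℕ) (X : ℕ → Set α) : Prop :=
  (∑ i ∈ Finset.Icc 3 n, M.rnk (X i)) + M.rnk (X 1 ∪ X 2) + M.rnk (X 1 ∪ X 3 ∪ X n)
      + ∑ i ∈ Finset.Icc 4 n, M.rnk (X 2 ∪ X (i - 1) ∪ X i)
    ≤ M.rnk (X 1 ∪ X 3) + M.rnk (X 1 ∪ X n)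
      + (∑ i ∈ Finset.Icc 3 n, M.rnk (X 2 ∪ X i))
      + ∑ i ∈ Finset.Icc 4 n, M.rnk (X (i - 1) ∪ X i)

/-- `M` lies in the Kinser class `K n`: the `n`-th Kinser inequality holds for every
family of `n` subsets of the ground set. -/
def MemKinserClass (M : Matroid α) (n : ℕ) : Prop :=
  ∀ X : ℕ → Set α, (∀ i ∈ Finset.Icc 1 n, X i ⊆ M.E) → M.KinserIneq n X

/-- `M` is (isomorphic to) the matroid of linear dependence of a family of vectors of a
vector space over `𝔽`. -/
def IsRepOver {α : Type u} (M : Matroid α) (𝔽 : Type v) [Field 𝔽] : Prop :=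
  ∃ (W : Type (max u v)) (_ : AddCommGroup W) (_ : Module 𝔽 W) (φ : α → W),
    ∀ I : Set α, M.Indep I ↔ I ⊆ M.E ∧ LinearIndependent 𝔽 (fun x : I => φ x.1)

/-- Deletion of a set of elements from a matroid. -/
def del (M : Matroid α) (D : Set α) : Matroid α := M ↾ (M.E \ D)

/-- Contraction of a set of elements in a matroid. -/
def con (M : Matroid α) (C : Set α) : Matroid α := (M✶ ↾ (M✶.E \ C))✶

/-- `N` is a minor of `M`: it is obtained from `M` by contractions and deletions. -/
def IsMinorOf (N M : Matroid α) : Prop :=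
  ∃ C D : Set α, C ⊆ M.E ∧ D ⊆ M.E ∧ Disjoint C D ∧ N = (M.con C).del D

/-- `N` is a proper minor of `M`: at least one element is deleted or contracted. -/
def IsProperMinorOf (N M : Matroid α) : Prop :=
  ∃ C D : Set α, C ⊆ M.E ∧ D ⊆ M.E ∧ Disjoint C D ∧ (C ∪ D).Nonempty ∧
    N = (M.con C).del D

/-- A matroid isomorphism: a bijection of ground sets preserving independence. -/
def IsIsoTo {β : Type*} (M : Matroid α) (N : Matroid β) : Prop :=
  ∃ f : α → β, Set.BijOn f M.E N.E ∧ ∀ I ⊆ M.E, (M.Indep I ↔ N.Indep (f '' I))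

/-- The Ingleton inequality (the 4th Kinser inequality) for four subsets. -/
def IngletonIneq (M : Matroid α) (X₁ X₂ X₃ X₄ : Set α) : Prop :=
  M.rnk X₃ + M.rnk X₄ + M.rnk (X₁ ∪ X₂) + M.rnk (X₁ ∪ X₃ ∪ X₄) + M.rnk (X₂ ∪ X₃ ∪ X₄)
    ≤ M.rnk (X₁ ∪ X₃) + M.rnk (X₁ ∪ X₄) + M.rnk (X₂ ∪ X₃) + M.rnk (X₂ ∪ X₄)
      + M.rnk (X₃ ∪ X₄)

end Matroid


section KinserProof

open Submodule Module

variable {𝔽 Wv : Type*} [Field 𝔽] [AddCommGroup Wv] [Module 𝔽 Wv]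



open Submodule Module

variable {𝔽 Wv : Type*} [Field 𝔽] [AddCommGroup Wv] [Module 𝔽 Wv]

private lemma fr_ingleton [FiniteDimensional 𝔽 Wv] (A B C D : Submodule 𝔽 Wv) :
    finrank 𝔽 C + finrank 𝔽 D + finrank 𝔽 ↥(A ⊔ B) + finrank 𝔽 ↥(A ⊔ C ⊔ D)
      + finrank 𝔽 ↥(B ⊔ C ⊔ D)
    ≤ finrank 𝔽 ↥(A ⊔ C) + finrank 𝔽 ↥(A ⊔ D) + finrank 𝔽 ↥(B ⊔ C) + finrank 𝔽 ↥(B ⊔ D)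
      + finrank 𝔽 ↥(C ⊔ D) := by
  have mod := fun s t : Submodule 𝔽 Wv => Submodule.finrank_sup_add_finrank_inf_eq s t
  have mono : ∀ {s t : Submodule 𝔽 Wv}, s ≤ t → finrank 𝔽 s ≤ finrank 𝔽 t :=
    fun h => Submodule.finrank_mono h
  have h1 := mod A (C ⊔ D); rw [← sup_assoc] at h1
  have h2 := mod B (C ⊔ D); rw [← sup_assoc] at h2
  have h3 := mod A C
  have h4 := mod A D
  have h5 := mod B C
  have h6 := mod B D
  have h7 := mod C D
  have h8 := mod A B
  have g1 := mod (A ⊓ C) (A ⊓ D)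
  have g2 : finrank 𝔽 ↥((A ⊓ C) ⊔ (A ⊓ D)) ≤ finrank 𝔽 ↥(A ⊓ (C ⊔ D)) :=
    mono (sup_le (inf_le_inf_left A le_sup_left) (inf_le_inf_left A le_sup_right))
  have g3 := mod (B ⊓ C) (B ⊓ D)
  have g4 : finrank 𝔽 ↥((B ⊓ C) ⊔ (B ⊓ D)) ≤ finrank 𝔽 ↥(B ⊓ (C ⊔ D)) :=
    mono (sup_le (inf_le_inf_left B le_sup_left) (inf_le_inf_left B le_sup_right))
  have g5 := mod ((A ⊓ C) ⊓ (A ⊓ D)) ((B ⊓ C) ⊓ (B ⊓ D))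
  have g6 : finrank 𝔽 ↥(((A ⊓ C) ⊓ (A ⊓ D)) ⊔ ((B ⊓ C) ⊓ (B ⊓ D))) ≤ finrank 𝔽 ↥(C ⊓ D) :=
    mono (sup_le
      (le_inf (inf_le_left.trans inf_le_right) (inf_le_right.trans inf_le_right))
      (le_inf (inf_le_left.trans inf_le_right) (inf_le_right.trans inf_le_right)))
  have g7 : finrank 𝔽 ↥(((A ⊓ C) ⊓ (A ⊓ D)) ⊓ ((B ⊓ C) ⊓ (B ⊓ D))) ≤ finrank 𝔽 ↥(A ⊓ B) :=
    mono (le_inf (inf_le_left.trans (inf_le_left.trans inf_le_left))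
      (inf_le_right.trans (inf_le_left.trans inf_le_left)))
  omega

private lemma kinser_step [FiniteDimensional 𝔽 Wv] (A B C P Q R : Submodule 𝔽 Wv) :
    finrank 𝔽 Q + finrank 𝔽 R + finrank 𝔽 ↥(A ⊔ C ⊔ R) + finrank 𝔽 ↥(B ⊔ P ⊔ Q)
      + finrank 𝔽 ↥(B ⊔ Q ⊔ R) + finrank 𝔽 ↥(A ⊔ Q ⊓ R) + finrank 𝔽 ↥(B ⊔ Q ⊓ R)
      + finrank 𝔽 ↥(P ⊔ Q ⊓ R)
    ≤ finrank 𝔽 ↥(Q ⊓ R) + finrank 𝔽 ↥(A ⊔ C ⊔ Q ⊓ R) + finrank 𝔽 ↥(B ⊔ P ⊔ Q ⊓ R)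
      + finrank 𝔽 ↥(A ⊔ R) + finrank 𝔽 ↥(B ⊔ Q) + finrank 𝔽 ↥(B ⊔ R) + finrank 𝔽 ↥(P ⊔ Q)
      + finrank 𝔽 ↥(Q ⊔ R) := by
  have mod := fun s t : Submodule 𝔽 Wv => Submodule.finrank_sup_add_finrank_inf_eq s t
  have mono : ∀ {s t : Submodule 𝔽 Wv}, s ≤ t → finrank 𝔽 s ≤ finrank 𝔽 t :=
    fun h => Submodule.finrank_mono h
  have h1 := mod A (C ⊔ R); rw [← sup_assoc] at h1
  have h2 := mod C R
  have h3 := mod A (C ⊔ Q ⊓ R); rw [← sup_assoc] at h3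
  have h4 := mod C (Q ⊓ R)
  have h5 := mod B (P ⊔ Q); rw [← sup_assoc] at h5
  have h6 := mod P Q
  have h7 := mod B (Q ⊔ R); rw [← sup_assoc] at h7
  have h8 := mod Q R
  have h9 := mod B (P ⊔ Q ⊓ R); rw [← sup_assoc] at h9
  have h10 := mod P (Q ⊓ R)
  have h11 := mod A (Q ⊓ R)
  have h12 := mod B (Q ⊓ R)
  have h13 := mod A R
  have h14 := mod B Q
  have h15 := mod B R
  -- P1
  have q1 := mod (B ⊓ Q) (B ⊓ R)
  have q2 : (B ⊓ Q) ⊓ (B ⊓ R) = B ⊓ (Q ⊓ R) := (inf_inf_distrib_left B Q R).symm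
  rw [q2] at q1
  have q3 : finrank 𝔽 ↥((B ⊓ Q) ⊔ (B ⊓ R)) ≤ finrank 𝔽 ↥(B ⊓ (Q ⊔ R)) :=
    mono (sup_le (inf_le_inf_left B le_sup_left) (inf_le_inf_left B le_sup_right))
  -- P2
  have p2 : finrank 𝔽 ↥(B ⊓ (P ⊔ Q ⊓ R)) ≤ finrank 𝔽 ↥(B ⊓ (P ⊔ Q)) :=
    mono (inf_le_inf_left B (sup_le_sup_left inf_le_left P))
  -- P3
  have r1 := mod (A ⊓ R) (A ⊓ (C ⊔ Q ⊓ R))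
  have r2 : (A ⊓ R) ⊓ (A ⊓ (C ⊔ Q ⊓ R)) = A ⊓ (Q ⊓ R ⊔ C ⊓ R) := by
    rw [← inf_inf_distrib_left]
    congr 1
    rw [inf_comm R (C ⊔ Q ⊓ R), sup_comm C (Q ⊓ R),
      sup_inf_assoc_of_le C (inf_le_right : Q ⊓ R ≤ R)]
  rw [r2] at r1
  have r3 : finrank 𝔽 ↥((A ⊓ R) ⊔ (A ⊓ (C ⊔ Q ⊓ R))) ≤ finrank 𝔽 ↥(A ⊓ (C ⊔ R)) :=
    mono (sup_le (inf_le_inf_left A le_sup_right)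
      (inf_le_inf_left A (sup_le_sup_left inf_le_right C)))
  have r4 := mod (A ⊓ (Q ⊓ R ⊔ C ⊓ R)) (Q ⊓ R)
  have r5 : (A ⊓ (Q ⊓ R ⊔ C ⊓ R)) ⊓ (Q ⊓ R) = A ⊓ (Q ⊓ R) := by
    rw [inf_assoc, inf_eq_right.mpr (le_sup_left : Q ⊓ R ≤ Q ⊓ R ⊔ C ⊓ R)]
  rw [r5] at r4
  have r6 : finrank 𝔽 ↥((A ⊓ (Q ⊓ R ⊔ C ⊓ R)) ⊔ Q ⊓ R) ≤ finrank 𝔽 ↥(Q ⊓ R ⊔ C ⊓ R) :=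
    mono (sup_le inf_le_right le_sup_left)
  have r7 := mod (Q ⊓ R) (C ⊓ R)
  have r8 : (Q ⊓ R) ⊓ (C ⊓ R) = C ⊓ (Q ⊓ R) := by
    apply le_antisymm
    · exact le_inf (inf_le_right.trans inf_le_left) inf_le_left
    · exact le_inf inf_le_right (le_inf inf_le_left (inf_le_right.trans inf_le_right))
  rw [r8] at r7
  omega



private lemma kinser_dim [FiniteDimensional 𝔽 Wv] :
    ∀ {n : ℕ}, 4 ≤ n → ∀ V : ℕ → Submodule 𝔽 Wv,
      (∑ i ∈ Finset.Icc 3 n, finrank 𝔽 (V i)) + finrank 𝔽 ↥(V 1 ⊔ V 2)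
          + finrank 𝔽 ↥(V 1 ⊔ V 3 ⊔ V n)
          + ∑ i ∈ Finset.Icc 4 n, finrank 𝔽 ↥(V 2 ⊔ V (i - 1) ⊔ V i)
        ≤ finrank 𝔽 ↥(V 1 ⊔ V 3) + finrank 𝔽 ↥(V 1 ⊔ V n)
          + (∑ i ∈ Finset.Icc 3 n, finrank 𝔽 ↥(V 2 ⊔ V i))
          + ∑ i ∈ Finset.Icc 4 n, finrank 𝔽 ↥(V (i - 1) ⊔ V i) := by
  intro n hn
  induction n, hn using Nat.le_induction with
  | base =>
    intro V
    have key := fr_ingleton (V 1) (V 2) (V 3) (V 4)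
    have e1 : Finset.Icc 3 4 = {3, 4} := by decide
    have e2 : Finset.Icc 4 4 = {4} := Finset.Icc_self 4
    rw [e1, e2, Finset.sum_pair (by norm_num : (3:ℕ) ≠ 4),
      Finset.sum_pair (by norm_num : (3:ℕ) ≠ 4), Finset.sum_singleton, Finset.sum_singleton]
    rw [show (4:ℕ) - 1 = 3 from rfl] at *
    omega
  | succ n hn IH =>
    intro V
    obtain ⟨m, rfl⟩ : ∃ m, n = m + 1 := ⟨n - 1, by omega⟩
    have hm : 3 ≤ m := by omega
    set U : ℕ → Submodule 𝔽 Wv :=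
      fun i => if i = m + 1 then V (m + 1) ⊓ V (m + 1 + 1) else V i with hUdef
    have hU : ∀ i, i ≤ m → U i = V i := fun i hi => if_neg (by omega)
    have hUtop : U (m + 1) = V (m + 1) ⊓ V (m + 1 + 1) := if_pos rfl
    have hIH := IH U
    rw [Finset.sum_Icc_succ_top (by omega : 3 ≤ m + 1),
      Finset.sum_Icc_succ_top (by omega : 4 ≤ m + 1),
      Finset.sum_Icc_succ_top (by omega : 3 ≤ m + 1),
      Finset.sum_Icc_succ_top (by omega : 4 ≤ m + 1), Nat.add_sub_cancel] at hIH
    have hs1 : ∑ i ∈ Finset.Icc 3 m, finrank 𝔽 (U i) = ∑ i ∈ Finset.Icc 3 m, finrank 𝔽 (V i) :=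
      Finset.sum_congr rfl fun i hi => by rw [hU i (Finset.mem_Icc.mp hi).2]
    have hs2 : ∑ i ∈ Finset.Icc 3 m, finrank 𝔽 ↥(U 2 ⊔ U i)
        = ∑ i ∈ Finset.Icc 3 m, finrank 𝔽 ↥(V 2 ⊔ V i) :=
      Finset.sum_congr rfl fun i hi => by
        have h := Finset.mem_Icc.mp hi
        rw [hU 2 (by omega), hU i (by omega)]
    have hs3 : ∑ i ∈ Finset.Icc 4 m, finrank 𝔽 ↥(U 2 ⊔ U (i - 1) ⊔ U i)
        = ∑ i ∈ Finset.Icc 4 m, finrank 𝔽 ↥(V 2 ⊔ V (i - 1) ⊔ V i) :=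
      Finset.sum_congr rfl fun i hi => by
        have h := Finset.mem_Icc.mp hi
        rw [hU 2 (by omega), hU (i - 1) (by omega), hU i (by omega)]
    have hs4 : ∑ i ∈ Finset.Icc 4 m, finrank 𝔽 ↥(U (i - 1) ⊔ U i)
        = ∑ i ∈ Finset.Icc 4 m, finrank 𝔽 ↥(V (i - 1) ⊔ V i) :=
      Finset.sum_congr rfl fun i hi => by
        have h := Finset.mem_Icc.mp hi
        rw [hU (i - 1) (by omega), hU i (by omega)]
    rw [hs1, hs2, hs3, hs4, hU 1 (by omega), hU 2 (by omega), hU 3 (by omega),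
      hU m le_rfl, hUtop] at hIH
    rw [Finset.sum_Icc_succ_top (by omega : 3 ≤ m + 1 + 1),
      Finset.sum_Icc_succ_top (by omega : 3 ≤ m + 1),
      Finset.sum_Icc_succ_top (by omega : 4 ≤ m + 1 + 1),
      Finset.sum_Icc_succ_top (by omega : 4 ≤ m + 1),
      Finset.sum_Icc_succ_top (by omega : 3 ≤ m + 1 + 1),
      Finset.sum_Icc_succ_top (by omega : 3 ≤ m + 1),
      Finset.sum_Icc_succ_top (by omega : 4 ≤ m + 1 + 1),
      Finset.sum_Icc_succ_top (by omega : 4 ≤ m + 1),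
      Nat.add_sub_cancel, Nat.add_sub_cancel]
    have step := kinser_step (V 1) (V 2) (V 3) (V m) (V (m + 1)) (V (m + 1 + 1))
    omega

private lemma rnk_eq_finrank_span {α : Type*} {𝔽 W : Type*} [Field 𝔽] [AddCommGroup W]
    [Module 𝔽 W] (M : Matroid α) (hE : M.E.Finite) (φ : α → W)
    (hφ : ∀ I : Set α, M.Indep I ↔ I ⊆ M.E ∧ LinearIndependent 𝔽 (fun x : I => φ x.1))
    (S : Set α) :
    M.rnk S = finrank 𝔽 (span 𝔽 (φ '' (S ∩ M.E))) := by
  classical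
  have hTfin : (φ '' (S ∩ M.E)).Finite := (hE.subset Set.inter_subset_right).image φ
  haveI := FiniteDimensional.span_of_finite 𝔽 hTfin
  have hub : ∀ k ∈ {n : ℕ | ∃ I, M.Indep I ∧ I ⊆ S ∧ I.ncard = n},
      k ≤ finrank 𝔽 (span 𝔽 (φ '' (S ∩ M.E))) := by
    rintro k ⟨I, hI, hIS, rfl⟩
    obtain ⟨hIE, hli⟩ := (hφ I).mp hI
    haveI : Fintype I := (hE.subset hIE).fintype
    have himg : Set.range (fun x : I => φ x.1) = φ '' I := (Set.image_eq_range φ I).symm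
    calc I.ncard = Fintype.card I := by rw [Set.ncard_eq_toFinset_card', Set.toFinset_card]
      _ = finrank 𝔽 (span 𝔽 (Set.range fun x : I => φ x.1)) := (finrank_span_eq_card hli).symm
      _ = finrank 𝔽 (span 𝔽 (φ '' I)) := by rw [himg]
      _ ≤ finrank 𝔽 (span 𝔽 (φ '' (S ∩ M.E))) :=
        Submodule.finrank_mono (span_mono (Set.image_mono (f := φ) (Set.subset_inter hIS hIE)))
  obtain ⟨b, hbT, hbspan, hbli⟩ := exists_linearIndependent 𝔽 (φ '' (S ∩ M.E))
  have hbfin : b.Finite := hTfin.subset hbT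
  haveI : Fintype b := hbfin.fintype
  have hex : ∀ v : b, ∃ x, x ∈ S ∩ M.E ∧ φ x = ↑v := fun v => hbT v.2
  choose g hg1 hg2 using hex
  have hginj : Function.Injective g := fun v w h =>
    Subtype.ext (by rw [← hg2 v, ← hg2 w, h])
  have hIE : Set.range g ⊆ M.E := by rintro x ⟨v, rfl⟩; exact (hg1 v).2
  have hIS : Set.range g ⊆ S := by rintro x ⟨v, rfl⟩; exact (hg1 v).1
  have hliI : LinearIndependent 𝔽 (fun x : Set.range g => φ x.1) := by
    have hf : ∀ x : Set.range g, φ x.1 ∈ b := by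
      rintro ⟨x, v, rfl⟩; rw [hg2 v]; exact v.2
    have hfinj : Function.Injective (fun x : Set.range g => (⟨φ x.1, hf x⟩ : b)) := by
      rintro ⟨x, hx⟩ ⟨y, hy⟩ hxy
      obtain ⟨v, rfl⟩ := hx
      obtain ⟨w, rfl⟩ := hy
      simp only [Subtype.mk.injEq] at hxy
      rw [hg2 v, hg2 w] at hxy
      exact Subtype.ext (congrArg g (Subtype.ext hxy))
    exact hbli.comp _ hfinj
  have hIindep : M.Indep (Set.range g) := (hφ _).mpr ⟨hIE, hliI⟩
  have hIcard : (Set.range g).ncard = finrank 𝔽 (span 𝔽 (φ '' (S ∩ M.E))) := by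
    have h1 : (Set.range g).ncard = b.ncard := by
      rw [← Nat.card_coe_set_eq, ← Nat.card_coe_set_eq]
      exact Nat.card_congr (Equiv.ofInjective g hginj).symm
    have h2 : finrank 𝔽 (span 𝔽 b) = b.toFinset.card := finrank_span_set_eq_card hbli
    rw [h1, ← hbspan, h2, Set.ncard_eq_toFinset_card']
  refine le_antisymm (csSup_le ⟨_, _, hIindep, hIS, rfl⟩ hub) ?_
  rw [← hIcard]
  exact le_csSup ⟨_, hub⟩ ⟨_, hIindep, hIS, rfl⟩


end KinserProof


private lemma kinser_of_rep {α 𝔽 W : Type*} [Field 𝔽] [AddCommGroup W] [Module 𝔽 W]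
    (M : Matroid α) (hE : M.E.Finite) (φ : α → W)
    (hφ : ∀ I : Set α, M.Indep I ↔ I ⊆ M.E ∧ LinearIndependent 𝔽 (fun x : I => φ x.1))
    {n : ℕ} (hn : 4 ≤ n) (X : ℕ → Set α) : M.KinserIneq n X := by
  classical
  haveI : FiniteDimensional 𝔽 (Submodule.span 𝔽 (φ '' M.E)) :=
    FiniteDimensional.span_of_finite 𝔽 (hE.image φ)
  let ψ : α → ↥(Submodule.span 𝔽 (φ '' M.E)) := fun x =>
    if h : x ∈ M.E then ⟨φ x, Submodule.subset_span ⟨x, h, rfl⟩⟩ else 0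
  have hψφ : ∀ x ∈ M.E, ((ψ x : ↥(Submodule.span 𝔽 (φ '' M.E))) : W) = φ x := fun x h => by
    simp [ψ, h]
  have hψ : ∀ I : Set α, M.Indep I ↔ I ⊆ M.E ∧ LinearIndependent 𝔽 (fun x : I => ψ x.1) := by
    intro I
    rw [hφ I]
    refine and_congr_right fun hIE => ?_
    have heq : (Submodule.span 𝔽 (φ '' M.E)).subtype ∘ (fun x : I => ψ x.1)
        = fun x : I => φ x.1 := funext fun x => hψφ x.1 (hIE x.2)
    constructor
    · intro hli
      exact LinearIndependent.of_comp _ (by rw [heq]; exact hli)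
    · intro hli
      have h2 := hli.map' (Submodule.span 𝔽 (φ '' M.E)).subtype (Submodule.ker_subtype _)
      rwa [heq] at h2
  have hrk := rnk_eq_finrank_span M hE ψ hψ
  have hsup : ∀ S T : Set α, Submodule.span 𝔽 (ψ '' ((S ∪ T) ∩ M.E))
      = Submodule.span 𝔽 (ψ '' (S ∩ M.E)) ⊔ Submodule.span 𝔽 (ψ '' (T ∩ M.E)) := by
    intro S T
    rw [Set.union_inter_distrib_right, Set.image_union, Submodule.span_union]
  have hfr : ∀ S T : Set α, M.rnk (S ∪ T)
      = Module.finrank 𝔽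
        ↥(Submodule.span 𝔽 (ψ '' (S ∩ M.E)) ⊔ Submodule.span 𝔽 (ψ '' (T ∩ M.E))) := by
    intro S T
    rw [hrk, hsup]
  have htr : ∀ S T U : Set α, M.rnk (S ∪ T ∪ U)
      = Module.finrank 𝔽
        ↥(Submodule.span 𝔽 (ψ '' (S ∩ M.E)) ⊔ Submodule.span 𝔽 (ψ '' (T ∩ M.E))
          ⊔ Submodule.span 𝔽 (ψ '' (U ∩ M.E))) := by
    intro S T U
    rw [hrk, hsup, hsup]
  have e1 : ∑ i ∈ Finset.Icc 3 n, M.rnk (X i)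
      = ∑ i ∈ Finset.Icc 3 n, Module.finrank 𝔽 (Submodule.span 𝔽 (ψ '' (X i ∩ M.E))) :=
    Finset.sum_congr rfl fun i _ => hrk _
  have e2 : ∑ i ∈ Finset.Icc 4 n, M.rnk (X 2 ∪ X (i - 1) ∪ X i)
      = ∑ i ∈ Finset.Icc 4 n, Module.finrank 𝔽
          ↥(Submodule.span 𝔽 (ψ '' (X 2 ∩ M.E)) ⊔ Submodule.span 𝔽 (ψ '' (X (i - 1) ∩ M.E))
            ⊔ Submodule.span 𝔽 (ψ '' (X i ∩ M.E))) :=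
    Finset.sum_congr rfl fun i _ => htr _ _ _
  have e3 : ∑ i ∈ Finset.Icc 3 n, M.rnk (X 2 ∪ X i)
      = ∑ i ∈ Finset.Icc 3 n, Module.finrank 𝔽
          ↥(Submodule.span 𝔽 (ψ '' (X 2 ∩ M.E)) ⊔ Submodule.span 𝔽 (ψ '' (X i ∩ M.E))) :=
    Finset.sum_congr rfl fun i _ => hfr _ _
  have e4 : ∑ i ∈ Finset.Icc 4 n, M.rnk (X (i - 1) ∪ X i)
      = ∑ i ∈ Finset.Icc 4 n, Module.finrank 𝔽
          ↥(Submodule.span 𝔽 (ψ '' (X (i - 1) ∩ M.E)) ⊔ Submodule.span 𝔽 (ψ '' (X i ∩ M.E))) :=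
    Finset.sum_congr rfl fun i _ => hfr _ _
  unfold Matroid.KinserIneq
  rw [e1, e2, e3, e4, hfr (X 1) (X 2), htr (X 1) (X 3) (X n), hfr (X 1) (X 3), hfr (X 1) (X n)]
  exact kinser_dim hn (fun i => Submodule.span 𝔽 (ψ '' (X i ∩ M.E)))

/-- A finite matroid representable over some field satisfies the `n`-th Kinser inequality
for every family of `n` subsets of its ground set. -/
theorem Matroid.isRepOver_kinserIneq {α : Type u} (M : Matroid α) [M.Finite]
    (hrep : ∃ (𝔽 : Type v) (_ : Field 𝔽), M.IsRepOver 𝔽) {n : ℕ} (hn : 4 ≤ n)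
    (X : ℕ → Set α) (hX : ∀ i ∈ Finset.Icc 1 n, X i ⊆ M.E) :
    M.KinserIneq n X := by
  obtain ⟨𝔽, fF, W, iAG, iMod, φ, hφ⟩ := hrep
  exact @kinser_of_rep α 𝔽 W fF iAG iMod M M.ground_finite φ hφ n hn X
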